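/- Let A be a q×n complex matrix, W a nonzero n×q complex matrix, and m a positive integer. Then A^{Ⓦ_m,W,†} = (WA)^{Ⓦ_m}·W·A·A^†, where (WA)^{Ⓦ_m} is the m-weak group inverse of the square matrix WA. -/
import Mathlib


open Matrix

/-- Index of a square matrix: least `d` with `rank (B^d) = rank (B^(d+1))`. -/
noncomputable def matInd {ι : Type*} [Fintype ι] [DecidableEq ι] (B : Matrix ι ι ℂ) : ℕ :=
  sInf {d : ℕ | (B ^ d).rank = (B ^ (d + 1)).rank}

/-- `X` is the Moore-Penrose inverse of `A` (four Penrose equations). -/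
noncomputable def IsMP {ι κ : Type*} [Fintype ι] [Fintype κ] (A : Matrix ι κ ℂ) (X : Matrix κ ι ℂ) : Prop :=
  A * X * A = A ∧ X * A * X = X ∧ (A * X)ᴴ = A * X ∧ (X * A)ᴴ = X * A

/-- Column space (range) of a matrix. -/
noncomputable def mrange {ι κ : Type*} [Fintype κ] (M : Matrix ι κ ℂ) : Submodule ℂ (ι → ℂ) :=
  LinearMap.range M.mulVecLin

/-- Null space of a matrix. -/
noncomputable def mker {ι κ : Type*} [Fintype κ] (M : Matrix ι κ ℂ) : Submodule ℂ (κ → ℂ) :=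
  LinearMap.ker M.mulVecLin

/-- `X` is the core-EP inverse of `B`. -/
noncomputable def IsCoreEP {ι : Type*} [Fintype ι] [DecidableEq ι] (B X : Matrix ι ι ℂ) : Prop :=
  X * B * X = X ∧ mrange X = mrange (B ^ matInd B) ∧ mrange Xᴴ = mrange (B ^ matInd B)

/-- `X` is the Drazin inverse of `B`. -/
noncomputable def IsDrazin {ι : Type*} [Fintype ι] [DecidableEq ι] (B X : Matrix ι ι ℂ) : Prop :=
  X * B * X = X ∧ B * X = X * B ∧ B ^ (matInd B + 1) * X = B ^ matInd B

/-- `X` is the group inverse of `B`. -/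
noncomputable def IsGroupInv {ι : Type*} [Fintype ι] (B X : Matrix ι ι ℂ) : Prop :=
  B * X * B = B ∧ X * B * X = X ∧ B * X = X * B

/-- Frobenius norm of a matrix. -/
noncomputable def frobNorm {ι κ : Type*} [Fintype ι] [Fintype κ] (M : Matrix ι κ ℂ) : ℝ :=
  Real.sqrt (∑ i, ∑ j, ‖M i j‖ ^ 2)


section Aux

open Matrix

set_option linter.unusedSectionVars false

variable {ι κ : Type*} [Fintype ι] [Fintype κ] [DecidableEq ι] [DecidableEq κ]

lemma mrange_mul (M : Matrix ι ι ℂ) (N : Matrix ι κ ℂ) :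
    mrange (M * N) = Submodule.map M.mulVecLin (mrange N) := by
  simp only [mrange, Matrix.mulVecLin_mul, LinearMap.range_comp]

lemma matInd_spec (B : Matrix ι ι ℂ) :
    (B ^ matInd B).rank = (B ^ (matInd B + 1)).rank := by
  have hne : {d : ℕ | (B ^ d).rank = (B ^ (d + 1)).rank}.Nonempty := by
    by_contra h
    push_neg at h
    simp only [Set.not_nonempty_iff_eq_empty, Set.eq_empty_iff_forall_notMem,
      Set.mem_setOf_eq] at h
    have hlt : ∀ d : ℕ, (B ^ (d + 1)).rank < (B ^ d).rank := by
      intro d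
      have hle : (B ^ (d + 1)).rank ≤ (B ^ d).rank := by
        rw [pow_succ]
        exact Matrix.rank_mul_le_left _ _
      exact lt_of_le_of_ne hle (fun he => h d he.symm)
    have key : ∀ d : ℕ, (B ^ d).rank + d ≤ (B ^ 0).rank := by
      intro d
      induction d with
      | zero => simp
      | succ k ih =>
        have := hlt k
        omega
    have := key ((B ^ 0).rank + 1)
    omega
  exact Nat.sInf_mem hne

lemma mrange_pow_succ (B : Matrix ι ι ℂ) :
    mrange (B ^ (matInd B + 1)) = mrange (B ^ matInd B) := by
  apply Submodule.eq_of_le_of_finrank_le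
  · rw [pow_succ, mrange_mul]
    rintro x ⟨y, -, rfl⟩
    exact ⟨y, rfl⟩
  · exact le_of_eq (matInd_spec B)

lemma idem_mul_of_range_le (P : Matrix ι ι ℂ) (M : Matrix ι κ ℂ)
    (hP : P * P = P) (h : mrange M ≤ mrange P) : P * M = M := by
  ext i j
  have hj : M.mulVec (Pi.single j 1) ∈ mrange P :=
    h ⟨Pi.single j 1, rfl⟩
  obtain ⟨y, hy⟩ := hj
  have hPy : P.mulVec y = M.mulVec (Pi.single j 1) := hy
  have hv : (P * M).mulVec (Pi.single j 1) = M.mulVec (Pi.single j 1) := by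
    rw [← Matrix.mulVec_mulVec, ← hPy, Matrix.mulVec_mulVec, hP, hPy]
  have := congrFun hv i
  simpa [Matrix.mulVec_single_one] using this

/-- Key core-EP identity: `B * X * X = X`. -/
lemma coreEP_BX2 (B X : Matrix ι ι ℂ) (h : IsCoreEP B X) : B * (X * X) = X := by
  obtain ⟨hout, hr, -⟩ := h
  have hidem : (B * X) * (B * X) = B * X := by
    have h1 : (B * X) * (B * X) = B * (X * B * X) := by simp only [mul_assoc]
    rw [h1, hout]
  have hrBX : mrange (B * X) = mrange X := by
    rw [mrange_mul, hr, ← mrange_mul, ← pow_succ', mrange_pow_succ, ← hr]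
  have h2 : B * (X * X) = (B * X) * X := (mul_assoc B X X).symm
  rw [h2]
  exact idem_mul_of_range_le (B * X) X hidem hrBX.ge

lemma shift_pow (M : Matrix ι κ ℂ) (N : Matrix κ ι ℂ) (k : ℕ) :
    N * (M * N) ^ k = (N * M) ^ k * N := by
  induction k with
  | zero => simp
  | succ j ih =>
    rw [pow_succ']
    calc N * (M * N * (M * N) ^ j) = (N * M) * (N * (M * N) ^ j) := by
          simp only [Matrix.mul_assoc]
    _ = (N * M) * ((N * M) ^ j * N) := by rw [ih]
    _ = (N * M) ^ (j + 1) * N := by rw [pow_succ']; simp only [Matrix.mul_assoc]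

end Aux

theorem stmt8 {q n : ℕ} (A : Matrix (Fin q) (Fin n) ℂ) (W : Matrix (Fin n) (Fin q) ℂ)
    (hW : W ≠ 0) (m : ℕ) (hm : 0 < m)
    (Adag : Matrix (Fin n) (Fin q) ℂ) (hAdag : IsMP A Adag)
    (WAcep : Matrix (Fin n) (Fin n) ℂ) (hWAcep : IsCoreEP (W * A) WAcep)
    (AepW AWGm : Matrix (Fin q) (Fin n) ℂ) (AWGMP : Matrix (Fin n) (Fin q) ℂ)
    (hAepW : AepW = A * (WAcep * WAcep))
    (hAWGm : AWGm = (AepW * W) ^ m * AepW * (W * A) ^ m)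
    (hAWGMP : AWGMP = W * AWGm * W * A * Adag) :
    AWGMP = (WAcep ^ (m + 1) * (W * A) ^ m) * W * A * Adag := by
  set B := W * A with hB
  set Y := WAcep with hY
  have key : B * (Y * Y) = Y := coreEP_BX2 B Y hWAcep
  have h2 : W * (A * (Y * Y)) = Y := by
    rw [← Matrix.mul_assoc, ← hB, key]
  have hWAWGm : W * AWGm = Y ^ (m + 1) * B ^ m := by
    rw [hAWGm, hAepW]
    calc W * ((A * (Y * Y) * W) ^ m * (A * (Y * Y)) * B ^ m)
        = (W * (A * (Y * Y) * W) ^ m) * ((A * (Y * Y)) * B ^ m) := by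
          simp only [Matrix.mul_assoc]
    _ = ((W * (A * (Y * Y))) ^ m * W) * ((A * (Y * Y)) * B ^ m) := by
          rw [shift_pow]
    _ = (W * (A * (Y * Y))) ^ m * (W * (A * (Y * Y))) * B ^ m := by
          simp only [Matrix.mul_assoc]
    _ = (W * (A * (Y * Y))) ^ (m + 1) * B ^ m := by rw [pow_succ]
    _ = Y ^ (m + 1) * B ^ m := by rw [h2]
  rw [hAWGMP, hWAWGm]
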